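/- For ζ₁, ζ₂ ∈ ℝⁿ and p > 1, there exist constants C₃, C₄ > 0 depending only on p such that C₃·(max{|ζ₁ - ζ₂|, |ζ₂|})^(p-2)·|ζ₁ - ζ₂|² ≤ (|ζ₁|^(p-2)ζ₁ - |ζ₂|^(p-2)ζ₂)·(ζ₁ - ζ₂) ≤ C₄·(max{|ζ₁ - ζ₂|, |ζ₂|})^(p-2)·|ζ₁ - ζ₂|². -/

import Mathlib

open Real

private lemma aux_mul {p : ℝ} (hp : 1 < p) {x : ℝ} (hx : 0 ≤ x) : x ^ (p-2) * x = x ^ (p-1) := by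
  rcases hx.eq_or_lt with h | h
  · rw [← h, Real.zero_rpow (by linarith : p - 1 ≠ 0), mul_zero]
  · nth_rewrite 2 [← Real.rpow_one x]
    rw [← Real.rpow_add h]; ring_nf

private lemma tangent_ge2 {p : ℝ} (hp : 1 < p) (hp2 : 2 ≤ p) {A B : ℝ} (hB : 0 ≤ B) (hBA : B ≤ A) :
    A^(p-1) - B^(p-1) ≤ (p-1) * A^(p-2) * (A-B) := by
  rcases (hB.trans hBA).eq_or_lt with h | hA
  · have hB0 : B = 0 := le_antisymm (hBA.trans h.symm.le) hB
    rw [← h, hB0]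
    simp only [sub_self, mul_zero]
    exact le_refl 0
  · set x := B / A with hxdef
    have hx0 : 0 ≤ x := div_nonneg hB hA.le
    have hxB : B = x * A := (div_mul_cancel₀ B hA.ne').symm
    have hb := one_add_mul_self_le_rpow_one_add (by linarith : (-1:ℝ) ≤ x - 1)
      (by linarith : 1 ≤ p - 1)
    have h1x : (1 : ℝ) + (x - 1) = x := by ring
    rw [h1x] at hb
    have hxp : B^(p-1) = x^(p-1) * A^(p-1) := by
      rw [hxB, mul_rpow hx0 (le_of_lt hA)]
    have hAp : 0 < A^(p-1) := rpow_pos_of_pos hA _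
    have eA : A^(p-2)*A = A^(p-1) := aux_mul hp hA.le
    have h2 : (1 + (p-1)*(x-1)) * A^(p-1) ≤ B^(p-1) := by
      rw [hxp]; exact mul_le_mul_of_nonneg_right hb hAp.le
    have h3 : (x-1) * A^(p-1) = (B - A) * A^(p-2) := by
      rw [← eA, hxB]; ring
    nlinarith [h2, h3]

private lemma tangent_lt2 {p : ℝ} (hp : 1 < p) (hp2 : p ≤ 2) {A B : ℝ} (hB : 0 ≤ B) (hBA : B ≤ A) :
    (p-1) * A^(p-2) * (A-B) ≤ A^(p-1) - B^(p-1) := by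
  rcases (hB.trans hBA).eq_or_lt with h | hA
  · have hB0 : B = 0 := le_antisymm (hBA.trans h.symm.le) hB
    rw [← h, hB0]
    simp only [sub_self, mul_zero]
    exact le_refl 0
  · set x := B / A with hxdef
    have hx0 : 0 ≤ x := div_nonneg hB hA.le
    have hxB : B = x * A := (div_mul_cancel₀ B hA.ne').symm
    have hb := rpow_one_add_le_one_add_mul_self (by linarith : (-1:ℝ) ≤ x - 1)
      (by linarith : (0:ℝ) ≤ p - 1) (by linarith : p - 1 ≤ 1)
    have h1x : (1 : ℝ) + (x - 1) = x := by ring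
    rw [h1x] at hb
    have hxp : B^(p-1) = x^(p-1) * A^(p-1) := by
      rw [hxB, mul_rpow hx0 (le_of_lt hA)]
    have hAp : 0 < A^(p-1) := rpow_pos_of_pos hA _
    have eA : A^(p-2)*A = A^(p-1) := aux_mul hp hA.le
    have h2 : B^(p-1) ≤ (1 + (p-1)*(x-1)) * A^(p-1) := by
      rw [hxp]; exact mul_le_mul_of_nonneg_right hb hAp.le
    have h3 : (x-1) * A^(p-1) = (B - A) * A^(p-2) := by
      rw [← eA, hxB]; ring
    nlinarith [h2, h3]

private lemma e1_low_ge2 {p : ℝ} (hp : 1 < p) (hp2 : 2 ≤ p) {A B : ℝ} (hB : 0 ≤ B) (hBA : B ≤ A) :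
    2^(1-p) * (A+B)^(p-2) * (A-B)^2 ≤ (A^(p-1) - B^(p-1)) * (A-B) := by
  have hA : 0 ≤ A := hB.trans hBA
  have h1 : (A+B)^(p-2) ≤ (2*A)^(p-2) :=
    rpow_le_rpow (by linarith) (by linarith) (by linarith)
  have h2 : ((2:ℝ)*A)^(p-2) = 2^(p-2) * A^(p-2) := mul_rpow (by norm_num) hA
  have h3 : B^(p-2) ≤ A^(p-2) := rpow_le_rpow hB hBA (by linarith)
  have eA : A^(p-2)*A = A^(p-1) := aux_mul hp hA
  have eB : B^(p-2)*B = B^(p-1) := aux_mul hp hB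
  have h4 : (2:ℝ)^(1-p) * 2^(p-2) = 2^(-1:ℝ) := by
    rw [← Real.rpow_add (by norm_num)]; norm_num
  have h5 : (2:ℝ)^(-1:ℝ) = 1/2 := by
    rw [Real.rpow_neg_one]; norm_num
  have key : A^(p-2) * (A-B)^2 ≤ (A^(p-1) - B^(p-1)) * (A-B) := by
    nlinarith [mul_nonneg (mul_nonneg (sub_nonneg.2 hBA) hB) (sub_nonneg.2 h3)]
  have l1 : 2^(1-p) * (A+B)^(p-2) * (A-B)^2 ≤ 2^(1-p) * ((2:ℝ)^(p-2) * A^(p-2)) * (A-B)^2 := by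
    rw [← h2]; gcongr
  have h6 : 2^(1-p) * ((2:ℝ)^(p-2) * A^(p-2)) * (A-B)^2 = 1/2 * (A^(p-2)*(A-B)^2) := by
    rw [show (2:ℝ)^(1-p) * (2^(p-2) * A^(p-2)) * (A-B)^2
        = (2^(1-p)*2^(p-2)) * (A^(p-2)*(A-B)^2) by ring, h4, h5]
  have hAn : 0 ≤ A^(p-2) * (A-B)^2 := by positivity
  linarith

private lemma e1_up_ge2 {p : ℝ} (hp : 1 < p) (hp2 : 2 ≤ p) {A B : ℝ} (hB : 0 ≤ B) (hBA : B ≤ A) :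
    (A^(p-1) - B^(p-1)) * (A-B) ≤ (p+1) * (A+B)^(p-2) * (A-B)^2 := by
  have hA : 0 ≤ A := hB.trans hBA
  have ht := tangent_ge2 hp hp2 hB hBA
  have h1 : A^(p-2) ≤ (A+B)^(p-2) := rpow_le_rpow hA (by linarith) (by linarith)
  have hAB : 0 ≤ A - B := by linarith
  have hp1 : 0 ≤ p - 1 := by linarith
  nlinarith [mul_le_mul_of_nonneg_right ht hAB,
    mul_le_mul_of_nonneg_left h1 (mul_nonneg hp1 (sq_nonneg (A-B))),
    rpow_nonneg (by linarith : (0:ℝ) ≤ A+B) (p-2), sq_nonneg (A-B)]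

private lemma e1_low_lt2 {p : ℝ} (hp : 1 < p) (hp2 : p ≤ 2) {A B : ℝ} (hB : 0 ≤ B) (hBA : B ≤ A) :
    (p-1) * (A+B)^(p-2) * (A-B)^2 ≤ (A^(p-1) - B^(p-1)) * (A-B) := by
  rcases (hB.trans hBA).eq_or_lt with h | hA
  · have hB0 : B = 0 := le_antisymm (hBA.trans h.symm.le) hB
    rw [← h, hB0]
    simp only [sub_self, mul_zero]
    norm_num
  · have ht := tangent_lt2 hp hp2 hB hBA
    have h1 : (A+B)^(p-2) ≤ A^(p-2) := rpow_le_rpow_of_nonpos hA (by linarith) (by linarith)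
    have hAB : 0 ≤ A - B := by linarith
    have hp1 : 0 ≤ p - 1 := by linarith
    nlinarith [mul_le_mul_of_nonneg_right ht hAB,
      mul_le_mul_of_nonneg_left h1 (mul_nonneg hp1 (sq_nonneg (A-B)))]

private lemma e1_up_lt2 {p : ℝ} (hp : 1 < p) (hp2 : p ≤ 2) {A B : ℝ} (hB : 0 ≤ B) (hBA : B ≤ A) :
    (A^(p-1) - B^(p-1)) * (A-B) ≤ 2 * (A+B)^(p-2) * (A-B)^2 := by
  have hA : 0 ≤ A := hB.trans hBA
  rcases hB.eq_or_lt with hB0 | hB0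
  · rw [← hB0]
    rcases hA.eq_or_lt with hA0 | hA0
    · rw [← hA0]; norm_num
    · have e1 : A^(p-1) * A = A^p := by
        nth_rewrite 2 [← Real.rpow_one A]
        rw [← Real.rpow_add hA0]; ring_nf
      have e2 : A^(p-2) * A^2 = A^p := by
        rw [← Real.rpow_natCast A 2, ← Real.rpow_add hA0]; norm_num
      have hApos : 0 ≤ A^p := rpow_nonneg hA _
      rw [Real.zero_rpow (by linarith : p - 1 ≠ 0), sub_zero, add_zero, sub_zero]
      nlinarith [e1, e2, hApos]
  · have h1 : ((2:ℝ)*A)^(p-2) ≤ (A+B)^(p-2) :=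
      rpow_le_rpow_of_nonpos (by linarith) (by linarith) (by linarith)
    have h2 : ((2:ℝ)*A)^(p-2) = 2^(p-2) * A^(p-2) := mul_rpow (by norm_num) hA
    have h3 : (2:ℝ)^(-1:ℝ) ≤ 2^(p-2) :=
      rpow_le_rpow_of_exponent_le (by norm_num) (by linarith)
    have h3' : (2:ℝ)^(-1:ℝ) = 1/2 := by rw [Real.rpow_neg_one]; norm_num
    have h4 : A^(p-2) ≤ B^(p-2) := rpow_le_rpow_of_nonpos hB0 hBA (by linarith)
    have eA : A^(p-2)*A = A^(p-1) := aux_mul hp hA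
    have eB : B^(p-2)*B = B^(p-1) := aux_mul hp hB
    have hAB : 0 ≤ A - B := by linarith
    have hA2 : 0 ≤ A^(p-2) := rpow_nonneg hA _
    have key : A^(p-1) - B^(p-1) ≤ A^(p-2)*(A-B) := by
      nlinarith [mul_le_mul_of_nonneg_right h4 hB, eA, eB]
    rw [h2] at h1
    rw [h3'] at h3
    nlinarith [mul_le_mul_of_nonneg_right key hAB,
      mul_le_mul_of_nonneg_left h1 (by positivity : (0:ℝ) ≤ 2*(A-B)^2),
      mul_le_mul_of_nonneg_left (mul_le_mul_of_nonneg_left h3 hA2) (sq_nonneg (A-B))]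

private lemma e2_low_lt2' {q : ℝ} (h0 : 0 ≤ q) (h1 : q ≤ 1) {A B : ℝ} (hA : 0 ≤ A) (hB : 0 ≤ B) :
    (A+B)^q ≤ A^q + B^q := by
  have h := NNReal.rpow_add_le_add_rpow A.toNNReal B.toNNReal h0 h1
  have := NNReal.coe_le_coe.2 h
  push_cast [NNReal.coe_rpow] at this
  rwa [Real.coe_toNNReal A hA, Real.coe_toNNReal B hB] at this

private lemma e2_up' {q : ℝ} (h0 : 0 ≤ q) {A B : ℝ} (hA : 0 ≤ A) (hB : 0 ≤ B) :
    A^q + B^q ≤ 2*(A+B)^q := by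
  have h1 : A^q ≤ (A+B)^q := rpow_le_rpow hA (by linarith) h0
  have h2 : B^q ≤ (A+B)^q := rpow_le_rpow hB (by linarith) h0
  linarith

private lemma e2_low_ge2' {q : ℝ} (h1 : 1 ≤ q) {A B : ℝ} (hA : 0 ≤ A) (hB : 0 ≤ B) :
    2^(-q)*(A+B)^q ≤ A^q + B^q := by
  rcases le_total B A with hBA | hAB
  · have h2 : ((A+B)/2)^q ≤ A^q := rpow_le_rpow (by linarith) (by linarith) (by linarith)
    have h3 : ((A+B)/2)^q = (A+B)^q / 2^q := div_rpow (by linarith) (by norm_num) q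
    have h4 : (2:ℝ)^(-q) * 2^q = 1 := by
      rw [← Real.rpow_add (by norm_num)]; norm_num
    have h5 : (0:ℝ) < 2^q := rpow_pos_of_pos (by norm_num) _
    have h6 : 2^(-q)*(A+B)^q = (A+B)^q / 2^q := by
      rw [eq_div_iff h5.ne']; linear_combination (A+B)^q * h4
    have h7 : 0 ≤ B^q := rpow_nonneg hB _
    linarith [h3 ▸ h2]
  · have h2 : ((A+B)/2)^q ≤ B^q := rpow_le_rpow (by linarith) (by linarith) (by linarith)
    have h3 : ((A+B)/2)^q = (A+B)^q / 2^q := div_rpow (by linarith) (by norm_num) q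
    have h4 : (2:ℝ)^(-q) * 2^q = 1 := by
      rw [← Real.rpow_add (by norm_num)]; norm_num
    have h5 : (0:ℝ) < 2^q := rpow_pos_of_pos (by norm_num) _
    have h6 : 2^(-q)*(A+B)^q = (A+B)^q / 2^q := by
      rw [eq_div_iff h5.ne']; linear_combination (A+B)^q * h4
    have h7 : 0 ≤ A^q := rpow_nonneg hA _
    linarith [h3 ▸ h2]

-- symmetrized endpoint-1 inequalities
private lemma E1_low {p : ℝ} (hp : 1 < p) {K : ℝ}
    (hcore : ∀ A B : ℝ, 0 ≤ B → B ≤ A → K*(A+B)^(p-2)*(A-B)^2 ≤ (A^(p-1)-B^(p-1))*(A-B))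
    (A B : ℝ) (hA : 0 ≤ A) (hB : 0 ≤ B) :
    K*(A+B)^(p-2)*(A-B)^2 ≤ (A^(p-1)-B^(p-1))*(A-B) := by
  rcases le_total B A with h | h
  · exact hcore A B hB h
  · have hc := hcore B A hA h
    rw [show B + A = A + B by ring] at hc
    have e2 : (B-A)^2 = (A-B)^2 := by ring
    have e3 : (B^(p-1)-A^(p-1))*(B-A) = (A^(p-1)-B^(p-1))*(A-B) := by ring
    rw [e2, e3] at hc
    exact hc

private lemma E1_up {p : ℝ} (hp : 1 < p) {K : ℝ}
    (hcore : ∀ A B : ℝ, 0 ≤ B → B ≤ A → (A^(p-1)-B^(p-1))*(A-B) ≤ K*(A+B)^(p-2)*(A-B)^2)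
    (A B : ℝ) (hA : 0 ≤ A) (hB : 0 ≤ B) :
    (A^(p-1)-B^(p-1))*(A-B) ≤ K*(A+B)^(p-2)*(A-B)^2 := by
  rcases le_total B A with h | h
  · exact hcore A B hB h
  · have hc := hcore B A hA h
    rw [show B + A = A + B by ring] at hc
    have e2 : (B-A)^2 = (A-B)^2 := by ring
    have e3 : (B^(p-1)-A^(p-1))*(B-A) = (A^(p-1)-B^(p-1))*(A-B) := by ring
    rw [e2, e3] at hc
    exact hc

private lemma key_low {p : ℝ} (hp : 1 < p) {K : ℝ}
    (hE1 : ∀ A B : ℝ, 0 ≤ A → 0 ≤ B → K*(A+B)^(p-2)*(A-B)^2 ≤ (A^(p-1)-B^(p-1))*(A-B))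
    (hE2 : ∀ A B : ℝ, 0 ≤ A → 0 ≤ B → K*(A+B)^(p-1) ≤ A^(p-1)+B^(p-1))
    {n : ℕ} (a b : EuclideanSpace ℝ (Fin n)) :
    K*(‖a‖+‖b‖)^(p-2)*‖a-b‖^2 ≤
      (inner ℝ ((‖a‖^(p-2)) • a - (‖b‖^(p-2)) • b) (a-b) : ℝ) := by
  set A := ‖a‖ with hAdef
  set B := ‖b‖ with hBdef
  set s : ℝ := inner ℝ a b with hsdef
  have hA : 0 ≤ A := norm_nonneg a
  have hB : 0 ≤ B := norm_nonneg b
  have hI : (inner ℝ ((A^(p-2)) • a - (B^(p-2)) • b) (a-b) : ℝ)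
      = A^(p-2)*A^2 - (A^(p-2)+B^(p-2))*s + B^(p-2)*B^2 := by
    simp only [inner_sub_left, inner_sub_right, real_inner_smul_left, real_inner_smul_right,
      real_inner_self_eq_norm_sq, real_inner_comm, ← hAdef, ← hBdef]
    rw [hsdef]
    ring
  have hD : ‖a-b‖^2 = A^2 - 2*s + B^2 := norm_sub_sq_real a b
  have hs1 : s ≤ A*B := real_inner_le_norm a b
  have hs2 : -(A*B) ≤ s := by
    have h := abs_real_inner_le_norm a b
    rw [abs_le] at h
    linarith [h.1]
  have eA : A^(p-2)*A = A^(p-1) := aux_mul hp hA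
  have eB : B^(p-2)*B = B^(p-1) := aux_mul hp hB
  have eS : (A+B)^(p-2)*(A+B) = (A+B)^(p-1) := aux_mul hp (by linarith)
  have hend1 : 0 ≤ (A^(p-1)-B^(p-1))*(A-B) - K*(A+B)^(p-2)*(A-B)^2 :=
    sub_nonneg.2 (hE1 A B hA hB)
  have hend2 : 0 ≤ (A^(p-1)+B^(p-1))*(A+B) - K*(A+B)^(p-1)*(A+B) := by
    have h := hE2 A B hA hB
    nlinarith [mul_le_mul_of_nonneg_right h (by linarith : (0:ℝ) ≤ A+B)]
  set α : ℝ := A^(p-2)*A^2 + B^(p-2)*B^2 - K*(A+B)^(p-2)*(A^2+B^2) with hα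
  set β : ℝ := A^(p-2) + B^(p-2) - 2*K*(A+B)^(p-2) with hβ
  have hcomb : (inner ℝ ((A^(p-2)) • a - (B^(p-2)) • b) (a-b) : ℝ)
      - K*(A+B)^(p-2)*‖a-b‖^2 = α - β*s := by
    rw [hI, hD, hα, hβ]; ring
  have hab : α - β*(A*B) = (A^(p-1)-B^(p-1))*(A-B) - K*(A+B)^(p-2)*(A-B)^2 := by
    rw [hα, hβ]; linear_combination (A-B)*eA - (A-B)*eB
  have hmab : α + β*(A*B) = (A^(p-1)+B^(p-1))*(A+B) - K*(A+B)^(p-1)*(A+B) := by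
    rw [hα, hβ]; linear_combination (A+B)*eA + (A+B)*eB - K*(A+B)*eS
  rcases le_or_gt 0 β with hb | hb
  · have : β*s ≤ β*(A*B) := mul_le_mul_of_nonneg_left hs1 hb
    linarith
  · have : β*s ≤ β*(-(A*B)) := mul_le_mul_of_nonpos_left hs2 hb.le
    linarith

private lemma key_up {p : ℝ} (hp : 1 < p) {K : ℝ}
    (hE1 : ∀ A B : ℝ, 0 ≤ A → 0 ≤ B → (A^(p-1)-B^(p-1))*(A-B) ≤ K*(A+B)^(p-2)*(A-B)^2)
    (hE2 : ∀ A B : ℝ, 0 ≤ A → 0 ≤ B → A^(p-1)+B^(p-1) ≤ K*(A+B)^(p-1))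
    {n : ℕ} (a b : EuclideanSpace ℝ (Fin n)) :
    (inner ℝ ((‖a‖^(p-2)) • a - (‖b‖^(p-2)) • b) (a-b) : ℝ) ≤
      K*(‖a‖+‖b‖)^(p-2)*‖a-b‖^2 := by
  set A := ‖a‖ with hAdef
  set B := ‖b‖ with hBdef
  set s : ℝ := inner ℝ a b with hsdef
  have hA : 0 ≤ A := norm_nonneg a
  have hB : 0 ≤ B := norm_nonneg b
  have hI : (inner ℝ ((A^(p-2)) • a - (B^(p-2)) • b) (a-b) : ℝ)
      = A^(p-2)*A^2 - (A^(p-2)+B^(p-2))*s + B^(p-2)*B^2 := by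
    simp only [inner_sub_left, inner_sub_right, real_inner_smul_left, real_inner_smul_right,
      real_inner_self_eq_norm_sq, real_inner_comm, ← hAdef, ← hBdef]
    rw [hsdef]
    ring
  have hD : ‖a-b‖^2 = A^2 - 2*s + B^2 := norm_sub_sq_real a b
  have hs1 : s ≤ A*B := real_inner_le_norm a b
  have hs2 : -(A*B) ≤ s := by
    have h := abs_real_inner_le_norm a b
    rw [abs_le] at h
    linarith [h.1]
  have eA : A^(p-2)*A = A^(p-1) := aux_mul hp hA
  have eB : B^(p-2)*B = B^(p-1) := aux_mul hp hB
  have eS : (A+B)^(p-2)*(A+B) = (A+B)^(p-1) := aux_mul hp (by linarith)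
  have hend1 : 0 ≤ K*(A+B)^(p-2)*(A-B)^2 - (A^(p-1)-B^(p-1))*(A-B) :=
    sub_nonneg.2 (hE1 A B hA hB)
  have hend2 : 0 ≤ K*(A+B)^(p-1)*(A+B) - (A^(p-1)+B^(p-1))*(A+B) := by
    have h := hE2 A B hA hB
    nlinarith [mul_le_mul_of_nonneg_right h (by linarith : (0:ℝ) ≤ A+B)]
  set α : ℝ := A^(p-2)*A^2 + B^(p-2)*B^2 - K*(A+B)^(p-2)*(A^2+B^2) with hα
  set β : ℝ := A^(p-2) + B^(p-2) - 2*K*(A+B)^(p-2) with hβ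
  have hcomb : K*(A+B)^(p-2)*‖a-b‖^2
      - (inner ℝ ((A^(p-2)) • a - (B^(p-2)) • b) (a-b) : ℝ) = β*s - α := by
    rw [hI, hD, hα, hβ]; ring
  have hab : β*(A*B) - α = K*(A+B)^(p-2)*(A-B)^2 - (A^(p-1)-B^(p-1))*(A-B) := by
    rw [hα, hβ]; linear_combination (B-A)*eA + (A-B)*eB
  have hmab : -(β*(A*B)) - α = K*(A+B)^(p-1)*(A+B) - (A^(p-1)+B^(p-1))*(A+B) := by
    rw [hα, hβ]; linear_combination -(A+B)*eA - (A+B)*eB + K*(A+B)*eS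
  rcases le_or_gt 0 β with hb | hb
  · have : β*(-(A*B)) ≤ β*s := mul_le_mul_of_nonneg_left hs2 hb
    linarith
  · have : β*(A*B) ≤ β*s := mul_le_mul_of_nonpos_left hs1 hb.le
    linarith

theorem stmt_15 (n : ℕ) (p : ℝ) (hp : 1 < p) :
    ∃ C3 C4 : ℝ, 0 < C3 ∧ 0 < C4 ∧
      ∀ ζ1 ζ2 : EuclideanSpace ℝ (Fin n),
        C3 * (max ‖ζ1 - ζ2‖ ‖ζ2‖) ^ (p - 2) * ‖ζ1 - ζ2‖ ^ 2 ≤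
            inner ℝ ((‖ζ1‖ ^ (p - 2)) • ζ1 - (‖ζ2‖ ^ (p - 2)) • ζ2) (ζ1 - ζ2) ∧
          (inner ℝ ((‖ζ1‖ ^ (p - 2)) • ζ1 - (‖ζ2‖ ^ (p - 2)) • ζ2) (ζ1 - ζ2) : ℝ) ≤
            C4 * (max ‖ζ1 - ζ2‖ ‖ζ2‖) ^ (p - 2) * ‖ζ1 - ζ2‖ ^ 2 := by
  rcases le_or_gt 2 p with hp2 | hp2
  · -- p ≥ 2
    refine ⟨2^(1-p), 3^(p-2)*(p+1), rpow_pos_of_pos (by norm_num) _,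
      mul_pos (rpow_pos_of_pos (by norm_num) _) (by linarith), ?_⟩
    intro a b
    set A := ‖a‖ with hAdef
    set B := ‖b‖ with hBdef
    set D := ‖a - b‖ with hDdef
    have hA : 0 ≤ A := norm_nonneg a
    have hB : 0 ≤ B := norm_nonneg b
    have hDn : 0 ≤ D := norm_nonneg _
    set t := max D B with htdef
    have ht0 : 0 ≤ t := le_trans hDn (le_max_left _ _)
    have hDle : D ≤ A + B := norm_sub_le a b
    have htle : t ≤ A + B := max_le hDle (le_add_of_nonneg_left hA)
    have hE2low : ∀ X Y : ℝ, 0 ≤ X → 0 ≤ Y → (2:ℝ)^(1-p)*(X+Y)^(p-1) ≤ X^(p-1)+Y^(p-1) := by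
      intro X Y hX hY
      have := e2_low_ge2' (by linarith : 1 ≤ p-1) hX hY
      rwa [show -(p-1) = 1-p by ring] at this
    have hkl := key_low hp (E1_low hp (fun X Y hY hYX => e1_low_ge2 hp hp2 hY hYX)) hE2low a b
    have hE2up : ∀ X Y : ℝ, 0 ≤ X → 0 ≤ Y → X^(p-1)+Y^(p-1) ≤ (p+1)*(X+Y)^(p-1) := by
      intro X Y hX hY
      have h1 := e2_up' (by linarith : (0:ℝ) ≤ p-1) hX hY
      have h2 : 0 ≤ (X+Y)^(p-1) := rpow_nonneg (by linarith) _
      nlinarith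
    have hE1up : ∀ X Y : ℝ, 0 ≤ X → 0 ≤ Y →
        (X^(p-1)-Y^(p-1))*(X-Y) ≤ (p+1)*(X+Y)^(p-2)*(X-Y)^2 :=
      E1_up hp (fun X Y hY hYX => e1_up_ge2 hp hp2 hY hYX)
    have hku := key_up hp hE1up hE2up a b
    constructor
    · -- lower bound
      have ht : t^(p-2) ≤ (A+B)^(p-2) := rpow_le_rpow ht0 htle (by linarith)
      have h1 : (2:ℝ)^(1-p) * t^(p-2) * D^2 ≤ 2^(1-p) * (A+B)^(p-2) * D^2 := by
        gcongr
      exact le_trans h1 hkl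
    · -- upper bound
      rcases hDn.eq_or_lt with hD0 | hD0
      · have hab : a - b = 0 := by
          rw [← norm_eq_zero, ← hDdef, ← hD0]
        rw [hab]
        simp only [inner_zero_right, ← hD0]
        norm_num
      · have htpos : 0 < t := lt_of_lt_of_le hD0 (le_max_left _ _)
        have hA2t : A ≤ D + B := by
          calc A = ‖(a - b) + b‖ := by rw [sub_add_cancel]
          _ ≤ D + B := norm_add_le _ _
        have hABle : A + B ≤ 3*t := by
          have h1 : D ≤ t := le_max_left _ _
          have h2 : B ≤ t := le_max_right _ _
          linarith
        have h3 : (A+B)^(p-2) ≤ (3*t)^(p-2) :=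
          rpow_le_rpow (by linarith) hABle (by linarith)
        have h4 : ((3:ℝ)*t)^(p-2) = 3^(p-2)*t^(p-2) := mul_rpow (by norm_num) ht0
        have h5 : (p+1)*(A+B)^(p-2)*D^2 ≤ (p+1)*(3^(p-2)*t^(p-2))*D^2 := by
          rw [← h4]; gcongr
        calc (inner ℝ ((A^(p-2)) • a - (B^(p-2)) • b) (a-b) : ℝ)
            ≤ (p+1)*(A+B)^(p-2)*D^2 := hku
          _ ≤ (p+1)*(3^(p-2)*t^(p-2))*D^2 := h5
          _ = 3^(p-2)*(p+1)*t^(p-2)*D^2 := by ring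
  · -- 1 < p < 2
    refine ⟨3^(p-2)*(p-1), 2, mul_pos (rpow_pos_of_pos (by norm_num) _) (by linarith),
      by norm_num, ?_⟩
    intro a b
    set A := ‖a‖ with hAdef
    set B := ‖b‖ with hBdef
    set D := ‖a - b‖ with hDdef
    have hA : 0 ≤ A := norm_nonneg a
    have hB : 0 ≤ B := norm_nonneg b
    have hDn : 0 ≤ D := norm_nonneg _
    set t := max D B with htdef
    have ht0 : 0 ≤ t := le_trans hDn (le_max_left _ _)
    have hDle : D ≤ A + B := norm_sub_le a b
    have htle : t ≤ A + B := max_le hDle (le_add_of_nonneg_left hA)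
    have hE2low : ∀ X Y : ℝ, 0 ≤ X → 0 ≤ Y → (p-1)*(X+Y)^(p-1) ≤ X^(p-1)+Y^(p-1) := by
      intro X Y hX hY
      have h1 := e2_low_lt2' (by linarith : (0:ℝ) ≤ p-1) (by linarith : p-1 ≤ 1) hX hY
      have h2 : 0 ≤ (X+Y)^(p-1) := rpow_nonneg (by linarith) _
      nlinarith
    have hkl := key_low hp (E1_low hp (fun X Y hY hYX => e1_low_lt2 hp hp2.le hY hYX))
      hE2low a b
    have hE2up : ∀ X Y : ℝ, 0 ≤ X → 0 ≤ Y → X^(p-1)+Y^(p-1) ≤ 2*(X+Y)^(p-1) := by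
      intro X Y hX hY
      exact e2_up' (by linarith : (0:ℝ) ≤ p-1) hX hY
    have hE1up : ∀ X Y : ℝ, 0 ≤ X → 0 ≤ Y →
        (X^(p-1)-Y^(p-1))*(X-Y) ≤ 2*(X+Y)^(p-2)*(X-Y)^2 :=
      E1_up hp (fun X Y hY hYX => e1_up_lt2 hp hp2.le hY hYX)
    have hku := key_up hp hE1up hE2up a b
    constructor
    · -- lower bound
      rcases hDn.eq_or_lt with hD0 | hD0
      · have hab : a - b = 0 := by
          rw [← norm_eq_zero, ← hDdef, ← hD0]
        rw [hab]
        simp only [inner_zero_right, ← hD0]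
        norm_num
      · have htpos : 0 < t := lt_of_lt_of_le hD0 (le_max_left _ _)
        have hABpos : 0 < A + B := lt_of_lt_of_le hD0 hDle
        have hA2t : A ≤ D + B := by
          calc A = ‖(a - b) + b‖ := by rw [sub_add_cancel]
          _ ≤ D + B := norm_add_le _ _
        have hABle : A + B ≤ 3*t := by
          have h1 : D ≤ t := le_max_left _ _
          have h2 : B ≤ t := le_max_right _ _
          linarith
        have h3 : ((3:ℝ)*t)^(p-2) ≤ (A+B)^(p-2) :=
          rpow_le_rpow_of_nonpos hABpos hABle (by linarith)
        have h4 : ((3:ℝ)*t)^(p-2) = 3^(p-2)*t^(p-2) := mul_rpow (by norm_num) ht0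
        have h5 : (p-1)*(3^(p-2)*t^(p-2))*D^2 ≤ (p-1)*(A+B)^(p-2)*D^2 := by
          rw [← h4]
          exact mul_le_mul_of_nonneg_right
            (mul_le_mul_of_nonneg_left h3 (by linarith : (0:ℝ) ≤ p-1)) (sq_nonneg D)
        calc 3^(p-2)*(p-1) * t^(p-2) * D^2
            = (p-1)*(3^(p-2)*t^(p-2))*D^2 := by ring
          _ ≤ (p-1)*(A+B)^(p-2)*D^2 := h5
          _ ≤ _ := hkl
    · -- upper bound
      rcases hDn.eq_or_lt with hD0 | hD0
      · have hab : a - b = 0 := by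
          rw [← norm_eq_zero, ← hDdef, ← hD0]
        rw [hab]
        simp only [inner_zero_right, ← hD0]
        norm_num
      · have htpos : 0 < t := lt_of_lt_of_le hD0 (le_max_left _ _)
        have h3 : (A+B)^(p-2) ≤ t^(p-2) :=
          rpow_le_rpow_of_nonpos htpos htle (by linarith)
        have h5 : 2*(A+B)^(p-2)*D^2 ≤ 2*t^(p-2)*D^2 := by gcongr
        exact le_trans hku h5
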